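/- Let $X_1,\ldots,X_n$ be independent Bernoulli random variables with success probabilities $p_1,\ldots,p_n \in [0,1]$, and let $w_1,\ldots,w_n \in [0,1]$. Let $Y \sim \mathrm{Poisson}(\sum_{i=1}^n w_i p_i)$. Then $\sum_{i=1}^n w_i X_i \leq_{cx} Y$; in particular, for every convex function $\phi$ (with expectations existing), $\mathbb{E}[\phi(\sum_i w_i X_i)] \leq \mathbb{E}[\phi(Y)]$. -/

import Mathlib

open Finset

namespace Stmt4Aux

noncomputable def pois (q : ℝ) (k : ℕ) : ℝ :=
  Real.exp (-q) * q ^ k / (Nat.factorial k)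

lemma pois_nonneg {q : ℝ} (hq : 0 ≤ q) (k : ℕ) : 0 ≤ pois q k := by
  unfold pois; positivity

lemma summable_pois (q : ℝ) : Summable (pois q) := by
  refine ((Real.summable_pow_div_factorial q).mul_left (Real.exp (-q))).congr fun k => ?_
  simp [pois, mul_div_assoc]

lemma tsum_pois (q : ℝ) : ∑' k : ℕ, pois q k = 1 := by
  simp only [pois, mul_div_assoc]
  rw [tsum_mul_left]
  have h : ∑' k : ℕ, q ^ k / (Nat.factorial k : ℝ) = Real.exp q := by
    rw [Real.exp_eq_exp_ℝ, NormedSpace.exp_eq_tsum_div]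
  rw [h, ← Real.exp_add]
  simp

lemma succ_mul_pois (q : ℝ) (k : ℕ) :
    ((k + 1 : ℕ) : ℝ) * pois q (k + 1) = q * pois q k := by
  have h : (Nat.factorial (k + 1) : ℝ) = (k + 1) * Nat.factorial k := by
    push_cast [Nat.factorial_succ]; ring
  have hk : ((k : ℝ) + 1) ≠ 0 := by positivity
  have hf : (Nat.factorial k : ℝ) ≠ 0 := by
    exact_mod_cast Nat.factorial_ne_zero k
  simp only [pois, h]
  push_cast
  field_simp
  ring

lemma summable_mul_pois (q : ℝ) : Summable (fun k : ℕ => (k : ℝ) * pois q k) := by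
  rw [← summable_nat_add_iff 1]
  refine ((summable_pois q).mul_left q).congr fun k => ?_
  rw [← succ_mul_pois q k]

lemma tsum_mul_pois (q : ℝ) : ∑' k : ℕ, (k : ℝ) * pois q k = q := by
  rw [Summable.tsum_eq_zero_add (summable_mul_pois q)]
  have : (fun k : ℕ => ((k + 1 : ℕ) : ℝ) * pois q (k + 1)) = fun k : ℕ => q * pois q k := by
    funext k; exact succ_mul_pois q k
  push_cast
  push_cast at this
  rw [this, tsum_mul_left, tsum_pois]
  simp

lemma ofReal_tsum_le {g : ℕ → ℝ} (hg : Summable g) :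
    ENNReal.ofReal (∑' k, g k) ≤ ∑' k, ENNReal.ofReal (g k) := by
  have h1 : Summable fun k => max (g k) 0 := by
    apply Summable.of_nonneg_of_le (fun k => le_max_right _ _) (fun k => max_le (le_abs_self _) (abs_nonneg _)) hg.abs
  calc ENNReal.ofReal (∑' k, g k)
      ≤ ENNReal.ofReal (∑' k, max (g k) 0) :=
        ENNReal.ofReal_le_ofReal (Summable.tsum_le_tsum (fun k => le_max_left _ _) hg h1)
    _ = ∑' k, ENNReal.ofReal (max (g k) 0) :=
        ENNReal.ofReal_tsum_of_nonneg (fun k => le_max_right _ _) h1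
    _ = ∑' k, ENNReal.ofReal (g k) := by
        congr 1; funext k
        rcases le_total (g k) 0 with h | h
        · simp [max_eq_right h, ENNReal.ofReal_of_nonpos h]
        · simp [max_eq_left h]

/-- One-step lemma: a `[0,1]`-weighted Bernoulli is dominated by a Poisson with the same mean,
at any shift `a`, for a convex `ψ`. -/
lemma stepB {ψ : ℝ → ℝ} (hψ : ConvexOn ℝ Set.univ ψ) {w p : ℝ}
    (hw0 : 0 ≤ w) (hw1 : w ≤ 1) (hp0 : 0 ≤ p) (hp1 : p ≤ 1) (a : ℝ) :
    ENNReal.ofReal (p * ψ (a + w) + (1 - p) * ψ a) ≤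
      ∑' k : ℕ, ENNReal.ofReal (pois (w * p) k * ψ (a + k)) := by
  set q := w * p with hqdef
  have hq0 : 0 ≤ q := mul_nonneg hw0 hp0
  set Δ := ψ (a + 1) - ψ a with hΔdef
  have hcx : ψ (a + w) ≤ (1 - w) * ψ a + w * ψ (a + 1) := by
    have h := hψ.2 (Set.mem_univ a) (Set.mem_univ (a + 1)) (sub_nonneg.2 hw1) hw0 (by ring)
    simp only [smul_eq_mul] at h
    have he : (1 - w) * a + w * (a + 1) = a + w := by ring
    rwa [he] at h
  have h1 : p * ψ (a + w) + (1 - p) * ψ a ≤ ψ a + q * Δ := by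
    have := mul_le_mul_of_nonneg_left hcx hp0
    simp only [hqdef, hΔdef]; nlinarith
  have hmin : ∀ k : ℕ, ψ a + (k : ℝ) * Δ ≤ ψ (a + k) := by
    intro k
    rcases Nat.eq_zero_or_pos k with h0 | hpos
    · simp [h0]
    · have hk1 : (1 : ℝ) ≤ (k : ℝ) := by exact_mod_cast hpos
      have hkpos : (0 : ℝ) < (k : ℝ) := by linarith
      have hdiv1 : (0:ℝ) ≤ 1 - 1 / (k : ℝ) := by
        have : 1 / (k : ℝ) ≤ 1 := by
          rw [div_le_one hkpos]; exact hk1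
        linarith
      have hdiv2 : (0:ℝ) ≤ 1 / (k : ℝ) := by positivity
      have hdiv3 : (1 - 1 / (k : ℝ)) + 1 / (k : ℝ) = 1 := by ring
      have h := hψ.2 (Set.mem_univ a) (Set.mem_univ (a + (k : ℝ))) hdiv1 hdiv2 hdiv3
      simp only [smul_eq_mul] at h
      have he : (1 - 1 / (k : ℝ)) * a + 1 / (k : ℝ) * (a + (k : ℝ)) = a + 1 := by
        field_simp
        ring
      rw [he] at h
      have hkne : (k : ℝ) ≠ 0 := ne_of_gt hkpos
      have h' := mul_le_mul_of_nonneg_left h (le_of_lt hkpos)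
      have e : (k : ℝ) * ((1 - 1 / (k : ℝ)) * ψ a + 1 / (k : ℝ) * ψ (a + (k : ℝ))) =
          ((k : ℝ) - 1) * ψ a + ψ (a + (k : ℝ)) := by
        field_simp
      rw [e] at h'
      simp only [hΔdef]
      nlinarith [h']
  have hsum1 : Summable fun k : ℕ => pois q k * (ψ a + (k : ℝ) * Δ) := by
    have : (fun k : ℕ => pois q k * (ψ a + (k : ℝ) * Δ)) =
        fun k : ℕ => (ψ a) * pois q k + Δ * ((k : ℝ) * pois q k) := by
      funext k; ring
    rw [this]
    exact (((summable_pois q).mul_left (ψ a)).add ((summable_mul_pois q).mul_left Δ))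
  have htsum1 : ∑' k : ℕ, pois q k * (ψ a + (k : ℝ) * Δ) = ψ a + q * Δ := by
    have he : (fun k : ℕ => pois q k * (ψ a + (k : ℝ) * Δ)) =
        fun k : ℕ => (ψ a) * pois q k + Δ * ((k : ℝ) * pois q k) := by
      funext k; ring
    rw [he, Summable.tsum_add (((summable_pois q).mul_left (ψ a))) ((summable_mul_pois q).mul_left Δ),
      tsum_mul_left, tsum_mul_left, tsum_pois, tsum_mul_pois]
    ring
  calc ENNReal.ofReal (p * ψ (a + w) + (1 - p) * ψ a)
      ≤ ENNReal.ofReal (∑' k : ℕ, pois q k * (ψ a + (k : ℝ) * Δ)) := by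
        rw [htsum1]; exact ENNReal.ofReal_le_ofReal h1
    _ ≤ ∑' k : ℕ, ENNReal.ofReal (pois q k * (ψ a + (k : ℝ) * Δ)) := ofReal_tsum_le hsum1
    _ ≤ ∑' k : ℕ, ENNReal.ofReal (pois q k * ψ (a + k)) := by
        refine ENNReal.tsum_le_tsum fun k => ENNReal.ofReal_le_ofReal ?_
        exact mul_le_mul_of_nonneg_left (hmin k) (pois_nonneg hq0 k)

/-- Convolution of Poisson weights. -/
lemma pois_conv {μ ν : ℝ} (hμ : 0 ≤ μ) (hν : 0 ≤ ν) (m : ℕ) :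
    ∑ x ∈ Finset.HasAntidiagonal.antidiagonal m, pois μ x.1 * pois ν x.2 = pois (μ + ν) m := by
  have key : ∀ x ∈ Finset.HasAntidiagonal.antidiagonal m, pois μ x.1 * pois ν x.2 =
      Real.exp (-(μ + ν)) * ((m.choose x.1 : ℝ) * (μ ^ x.1 * ν ^ x.2)) / (Nat.factorial m) := by
    rintro ⟨j, k⟩ hx
    rw [Finset.HasAntidiagonal.mem_antidiagonal] at hx
    subst hx
    have hn : (j + k).choose j * Nat.factorial j * Nat.factorial k = Nat.factorial (j + k) := by
      have h0 := Nat.choose_mul_factorial_mul_factorial (Nat.le_add_right j k)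
      rwa [Nat.add_sub_cancel_left] at h0
    have hfac : ((Nat.factorial (j + k) : ℝ)) =
        ((j + k).choose j : ℝ) * (Nat.factorial j) * (Nat.factorial k) := by
      exact_mod_cast hn.symm
    have hj : (Nat.factorial j : ℝ) ≠ 0 := by exact_mod_cast Nat.factorial_ne_zero j
    have hk : (Nat.factorial k : ℝ) ≠ 0 := by exact_mod_cast Nat.factorial_ne_zero k
    have hjk : (Nat.factorial (j + k) : ℝ) ≠ 0 := by exact_mod_cast Nat.factorial_ne_zero (j + k)
    have hc : (((j + k).choose j : ℕ) : ℝ) ≠ 0 := by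
      have := Nat.choose_pos (Nat.le_add_right j k)
      positivity
    simp only [pois, neg_add, Real.exp_add]
    rw [hfac]
    field_simp
  rw [Finset.sum_congr rfl key]
  have hpow : ∑ x ∈ Finset.HasAntidiagonal.antidiagonal m, (m.choose x.1 : ℝ) * (μ ^ x.1 * ν ^ x.2) =
      (μ + ν) ^ m := by
    rw [(Commute.all μ ν).add_pow' m]
    refine Finset.sum_congr rfl fun x hx => ?_
    simp [nsmul_eq_mul]
  simp only [div_eq_mul_inv, ← Finset.sum_mul, ← Finset.mul_sum]
  rw [hpow]
  simp [pois, div_eq_mul_inv]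

lemma conv {μ ν : ℝ} (hμ : 0 ≤ μ) (hν : 0 ≤ ν) {ψ : ℝ → ℝ}
    (hψ0 : ∀ x : ℝ, 0 ≤ x → 0 ≤ ψ x) {a : ℝ} (ha : 0 ≤ a) :
    (∑' (k : ℕ) (j : ℕ), ENNReal.ofReal (pois μ k * (pois ν j * ψ (a + k + j)))) =
      ∑' m : ℕ, ENNReal.ofReal (pois (μ + ν) m * ψ (a + m)) := by
  rw [← ENNReal.tsum_prod' (f := fun x : ℕ × ℕ =>
    ENNReal.ofReal (pois μ x.1 * (pois ν x.2 * ψ (a + x.1 + x.2))))]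
  rw [← Finset.HasAntidiagonal.sigmaAntidiagonalEquivProd.tsum_eq (fun x : ℕ × ℕ =>
    ENNReal.ofReal (pois μ x.1 * (pois ν x.2 * ψ (a + x.1 + x.2))))]
  rw [ENNReal.tsum_sigma']
  refine tsum_congr fun m => ?_
  have h1 : (∑' (b : {x // x ∈ Finset.HasAntidiagonal.antidiagonal m}),
      ENNReal.ofReal (pois μ (b : ℕ × ℕ).1 * (pois ν (b : ℕ × ℕ).2 *
        ψ (a + (b : ℕ × ℕ).1 + (b : ℕ × ℕ).2)))) =
      ∑ x ∈ Finset.HasAntidiagonal.antidiagonal m,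
        ENNReal.ofReal (pois μ x.1 * (pois ν x.2 * ψ (a + x.1 + x.2))) :=
    Finset.tsum_subtype (Finset.HasAntidiagonal.antidiagonal m)
      (fun x : ℕ × ℕ => ENNReal.ofReal (pois μ x.1 * (pois ν x.2 * ψ (a + x.1 + x.2))))
  rw [show (∑' (b : (Finset.HasAntidiagonal.antidiagonal m : Finset (ℕ × ℕ))),
      ENNReal.ofReal (pois μ ((Finset.HasAntidiagonal.sigmaAntidiagonalEquivProd ⟨m, b⟩ : ℕ × ℕ)).1 *
        (pois ν ((Finset.HasAntidiagonal.sigmaAntidiagonalEquivProd ⟨m, b⟩ : ℕ × ℕ)).2 *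
          ψ (a + ((Finset.HasAntidiagonal.sigmaAntidiagonalEquivProd ⟨m, b⟩ : ℕ × ℕ)).1 +
            ((Finset.HasAntidiagonal.sigmaAntidiagonalEquivProd ⟨m, b⟩ : ℕ × ℕ)).2)))) =
      ∑' (b : {x // x ∈ Finset.HasAntidiagonal.antidiagonal m}),
      ENNReal.ofReal (pois μ (b : ℕ × ℕ).1 * (pois ν (b : ℕ × ℕ).2 *
        ψ (a + (b : ℕ × ℕ).1 + (b : ℕ × ℕ).2))) from rfl]
  rw [h1]
  have h2 : ∀ x ∈ Finset.HasAntidiagonal.antidiagonal m,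
      ENNReal.ofReal (pois μ x.1 * (pois ν x.2 * ψ (a + x.1 + x.2))) =
      ENNReal.ofReal (pois μ x.1 * pois ν x.2 * ψ (a + m)) := by
    rintro ⟨j, k⟩ hx
    rw [Finset.HasAntidiagonal.mem_antidiagonal] at hx
    subst hx
    push_cast
    ring_nf
  rw [Finset.sum_congr rfl h2, ← ENNReal.ofReal_sum_of_nonneg, ← Finset.sum_mul, pois_conv hμ hν]
  intro i hi
  have : (0 : ℝ) ≤ ψ (a + m) := hψ0 _ (add_nonneg ha (Nat.cast_nonneg m))
  exact mul_nonneg (mul_nonneg (pois_nonneg hμ _) (pois_nonneg hν _)) this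

section Main

variable {ι : Type*} [DecidableEq ι]

lemma mass (p : ι → ℝ) (s : Finset ι) :
    ∑ S ∈ s.powerset, (∏ i ∈ S, p i) * ∏ i ∈ s \ S, (1 - p i) = 1 := by
  rw [← Finset.prod_add]
  simp

lemma sdiff_insert_left {x : ι} {s T : Finset ι} (hx : x ∉ s) (hT : T ⊆ s) :
    (insert x s) \ T = insert x (s \ T) := by
  have hxT : x ∉ T := fun h => hx (hT h)
  rw [Finset.insert_sdiff_of_notMem _ hxT]

lemma sdiff_insert_both {x : ι} {s T : Finset ι} (hx : x ∉ s) (hT : T ⊆ s) :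
    (insert x s) \ (insert x T) = s \ T := by
  ext y
  simp only [Finset.mem_sdiff, Finset.mem_insert]
  constructor
  · rintro ⟨hy1 | hy1, hy2⟩
    · exact absurd (Or.inl hy1) hy2
    · exact ⟨hy1, fun h => hy2 (Or.inr h)⟩
  · rintro ⟨hy1, hy2⟩
    refine ⟨Or.inr hy1, ?_⟩
    rintro (rfl | h)
    · exact hx hy1
    · exact hy2 h

lemma mean (p w : ι → ℝ) (s : Finset ι) :
    ∑ S ∈ s.powerset, ((∏ i ∈ S, p i) * ∏ i ∈ s \ S, (1 - p i)) * (∑ i ∈ S, w i) =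
      ∑ i ∈ s, w i * p i := by
  classical
  induction s using Finset.induction_on with
  | empty => simp
  | @insert x s hx ih =>
    rw [Finset.sum_powerset_insert hx, Finset.sum_insert hx]
    have h1 : ∀ T ∈ s.powerset,
        ((∏ i ∈ T, p i) * ∏ i ∈ (insert x s) \ T, (1 - p i)) * (∑ i ∈ T, w i) =
        (1 - p x) * (((∏ i ∈ T, p i) * ∏ i ∈ s \ T, (1 - p i)) * (∑ i ∈ T, w i)) := by
      intro T hT
      rw [Finset.mem_powerset] at hT
      rw [sdiff_insert_left hx hT, Finset.prod_insert (fun h => hx (Finset.mem_sdiff.1 h).1)]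
      ring
    have h2 : ∀ T ∈ s.powerset,
        ((∏ i ∈ insert x T, p i) * ∏ i ∈ (insert x s) \ (insert x T), (1 - p i)) *
          (∑ i ∈ insert x T, w i) =
        p x * (((∏ i ∈ T, p i) * ∏ i ∈ s \ T, (1 - p i)) * (∑ i ∈ T, w i)) +
        (p x * w x) * ((∏ i ∈ T, p i) * ∏ i ∈ s \ T, (1 - p i)) := by
      intro T hT
      rw [Finset.mem_powerset] at hT
      have hxT : x ∉ T := fun h => hx (hT h)
      rw [sdiff_insert_both hx hT, Finset.prod_insert hxT, Finset.sum_insert hxT]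
      ring
    rw [Finset.sum_congr rfl h1, Finset.sum_congr rfl h2, Finset.sum_add_distrib,
      ← Finset.mul_sum, ← Finset.mul_sum, ← Finset.mul_sum, ih, mass]
    ring

lemma main (p w : ι → ℝ)
    (hp : ∀ i, 0 ≤ p i ∧ p i ≤ 1) (hw : ∀ i, 0 ≤ w i ∧ w i ≤ 1)
    (ψ : ℝ → ℝ) (hψ : ConvexOn ℝ Set.univ ψ) (hψ0 : ∀ x : ℝ, 0 ≤ x → 0 ≤ ψ x)
    (s : Finset ι) : ∀ a : ℝ, 0 ≤ a →
    ∑ S ∈ s.powerset, ENNReal.ofReal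
        (((∏ i ∈ S, p i) * ∏ i ∈ s \ S, (1 - p i)) * ψ (a + ∑ i ∈ S, w i)) ≤
      ∑' k : ℕ, ENNReal.ofReal (pois (∑ i ∈ s, w i * p i) k * ψ (a + k)) := by
  classical
  induction s using Finset.induction_on with
  | empty =>
    intro a _
    simp only [Finset.powerset_empty, Finset.sum_singleton, Finset.prod_empty,
      Finset.sdiff_empty, Finset.sum_empty, one_mul, add_zero]
    calc ENNReal.ofReal (ψ a) = ENNReal.ofReal (pois 0 0 * ψ (a + (0 : ℕ))) := by
          simp [pois]
      _ ≤ ∑' k : ℕ, ENNReal.ofReal (pois 0 k * ψ (a + k)) := ENNReal.le_tsum 0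
  | @insert x s hx ih =>
    intro a ha
    have hcnn : ∀ T : Finset ι, 0 ≤ (∏ i ∈ T, p i) * ∏ i ∈ s \ T, (1 - p i) := by
      intro T
      exact mul_nonneg (Finset.prod_nonneg fun i _ => (hp i).1)
        (Finset.prod_nonneg fun i _ => by linarith [(hp i).2])
    have hσnn : ∀ T : Finset ι, (0 : ℝ) ≤ ∑ i ∈ T, w i :=
      fun T => Finset.sum_nonneg fun i _ => (hw i).1
    set lam := ∑ i ∈ s, w i * p i with hlam
    have hlamnn : 0 ≤ lam := Finset.sum_nonneg fun i _ => mul_nonneg (hw i).1 (hp i).1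
    have hqnn : 0 ≤ w x * p x := mul_nonneg (hw x).1 (hp x).1
    rw [Finset.sum_powerset_insert hx]
    -- rewrite both sums and combine
    have step1 :
        (∑ T ∈ s.powerset, ENNReal.ofReal
            (((∏ i ∈ T, p i) * ∏ i ∈ (insert x s) \ T, (1 - p i)) * ψ (a + ∑ i ∈ T, w i))) +
          ∑ T ∈ s.powerset, ENNReal.ofReal
            (((∏ i ∈ insert x T, p i) * ∏ i ∈ (insert x s) \ (insert x T), (1 - p i)) *
              ψ (a + ∑ i ∈ insert x T, w i)) =
        ∑ T ∈ s.powerset,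
          ENNReal.ofReal ((∏ i ∈ T, p i) * ∏ i ∈ s \ T, (1 - p i)) *
            ENNReal.ofReal (p x * ψ ((a + ∑ i ∈ T, w i) + w x) +
              (1 - p x) * ψ (a + ∑ i ∈ T, w i)) := by
      rw [← Finset.sum_add_distrib]
      refine Finset.sum_congr rfl fun T hT => ?_
      rw [Finset.mem_powerset] at hT
      have hxT : x ∉ T := fun h => hx (hT h)
      rw [sdiff_insert_left hx hT, sdiff_insert_both hx hT,
        Finset.prod_insert (fun h => hx (Finset.mem_sdiff.1 h).1), Finset.prod_insert hxT,
        Finset.sum_insert hxT]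
      have e1 : (∏ i ∈ T, p i) * ((1 - p x) * ∏ i ∈ s \ T, (1 - p i)) * ψ (a + ∑ i ∈ T, w i) =
          ((∏ i ∈ T, p i) * ∏ i ∈ s \ T, (1 - p i)) * ((1 - p x) * ψ (a + ∑ i ∈ T, w i)) := by
        ring
      have e2 : (p x * ∏ i ∈ T, p i) * (∏ i ∈ s \ T, (1 - p i)) * ψ (a + (w x + ∑ i ∈ T, w i)) =
          ((∏ i ∈ T, p i) * ∏ i ∈ s \ T, (1 - p i)) *
            (p x * ψ ((a + ∑ i ∈ T, w i) + w x)) := by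
        have : a + (w x + ∑ i ∈ T, w i) = (a + ∑ i ∈ T, w i) + w x := by ring
        rw [this]; ring
      rw [e1, e2, ENNReal.ofReal_mul (hcnn T), ENNReal.ofReal_mul (hcnn T), ← mul_add,
        ← ENNReal.ofReal_add]
      · rw [add_comm ((1 - p x) * ψ (a + ∑ i ∈ T, w i))]
      · exact mul_nonneg (by linarith [(hp x).2]) (hψ0 _ (add_nonneg ha (hσnn T)))
      · exact mul_nonneg (hp x).1 (hψ0 _ (add_nonneg (add_nonneg ha (hσnn T)) (hw x).1))
    rw [step1]
    have step2 :
        ∑ T ∈ s.powerset,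
          ENNReal.ofReal ((∏ i ∈ T, p i) * ∏ i ∈ s \ T, (1 - p i)) *
            ENNReal.ofReal (p x * ψ ((a + ∑ i ∈ T, w i) + w x) +
              (1 - p x) * ψ (a + ∑ i ∈ T, w i)) ≤
        ∑ T ∈ s.powerset,
          ENNReal.ofReal ((∏ i ∈ T, p i) * ∏ i ∈ s \ T, (1 - p i)) *
            ∑' k : ℕ, ENNReal.ofReal (pois (w x * p x) k * ψ ((a + ∑ i ∈ T, w i) + k)) := by
      refine Finset.sum_le_sum fun T hT => ?_
      exact mul_le_mul_right (stepB hψ (hw x).1 (hw x).2 (hp x).1 (hp x).2 _) _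
    refine le_trans step2 ?_
    have step3 :
        ∑ T ∈ s.powerset,
          ENNReal.ofReal ((∏ i ∈ T, p i) * ∏ i ∈ s \ T, (1 - p i)) *
            ∑' k : ℕ, ENNReal.ofReal (pois (w x * p x) k * ψ ((a + ∑ i ∈ T, w i) + k)) =
        ∑' k : ℕ, ∑ T ∈ s.powerset,
          ENNReal.ofReal (pois (w x * p x) k) *
            ENNReal.ofReal (((∏ i ∈ T, p i) * ∏ i ∈ s \ T, (1 - p i)) *
              ψ ((a + k) + ∑ i ∈ T, w i)) := by
      have e : ∀ T ∈ s.powerset,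
          ENNReal.ofReal ((∏ i ∈ T, p i) * ∏ i ∈ s \ T, (1 - p i)) *
            (∑' k : ℕ, ENNReal.ofReal (pois (w x * p x) k * ψ ((a + ∑ i ∈ T, w i) + k))) =
          ∑' k : ℕ, ENNReal.ofReal (pois (w x * p x) k) *
            ENNReal.ofReal (((∏ i ∈ T, p i) * ∏ i ∈ s \ T, (1 - p i)) *
              ψ ((a + k) + ∑ i ∈ T, w i)) := by
        intro T hT
        rw [← ENNReal.tsum_mul_left]
        refine tsum_congr fun k => ?_
        rw [ENNReal.ofReal_mul (pois_nonneg hqnn k), ENNReal.ofReal_mul (hcnn T)]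
        have he2 : (a + ∑ i ∈ T, w i) + (k : ℝ) = (a + k) + ∑ i ∈ T, w i := by ring
        rw [he2]
        ring
      rw [Finset.sum_congr rfl e]
      exact (Summable.tsum_finsetSum (fun T _ => ENNReal.summable)).symm
    rw [step3]
    have step4 : ∀ k : ℕ,
        ∑ T ∈ s.powerset,
          ENNReal.ofReal (pois (w x * p x) k) *
            ENNReal.ofReal (((∏ i ∈ T, p i) * ∏ i ∈ s \ T, (1 - p i)) *
              ψ ((a + k) + ∑ i ∈ T, w i)) ≤
        ∑' j : ℕ, ENNReal.ofReal (pois (w x * p x) k * (pois lam j * ψ (a + k + j))) := by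
      intro k
      rw [← Finset.mul_sum]
      calc ENNReal.ofReal (pois (w x * p x) k) *
            ∑ T ∈ s.powerset, ENNReal.ofReal (((∏ i ∈ T, p i) * ∏ i ∈ s \ T, (1 - p i)) *
              ψ ((a + k) + ∑ i ∈ T, w i)) ≤
          ENNReal.ofReal (pois (w x * p x) k) *
            ∑' j : ℕ, ENNReal.ofReal (pois lam j * ψ ((a + k) + j)) := by
            exact mul_le_mul_right (ih (a + k) (add_nonneg ha (Nat.cast_nonneg k))) _
        _ = ∑' j : ℕ, ENNReal.ofReal (pois (w x * p x) k * (pois lam j * ψ (a + k + j))) := by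
            rw [← ENNReal.tsum_mul_left]
            refine tsum_congr fun j => ?_
            rw [← ENNReal.ofReal_mul (pois_nonneg hqnn k)]
    calc (∑' k : ℕ, ∑ T ∈ s.powerset,
          ENNReal.ofReal (pois (w x * p x) k) *
            ENNReal.ofReal (((∏ i ∈ T, p i) * ∏ i ∈ s \ T, (1 - p i)) *
              ψ ((a + k) + ∑ i ∈ T, w i))) ≤
        ∑' (k : ℕ) (j : ℕ), ENNReal.ofReal (pois (w x * p x) k * (pois lam j * ψ (a + k + j))) :=
          ENNReal.tsum_le_tsum step4
      _ = ∑' m : ℕ, ENNReal.ofReal (pois (w x * p x + lam) m * ψ (a + m)) :=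
          conv hqnn hlamnn hψ0 ha
      _ = ∑' k : ℕ, ENNReal.ofReal (pois (∑ i ∈ insert x s, w i * p i) k * ψ (a + k)) := by
          rw [Finset.sum_insert hx]

end Main

end Stmt4Aux

open Stmt4Aux in
/-- A `[0,1]`-weighted sum of independent Bernoulli random variables is dominated in the
convex order by a Poisson random variable with the matching mean. -/
theorem stmt_4 (n : ℕ) (p w : Fin n → ℝ)
    (hp : ∀ i, 0 ≤ p i ∧ p i ≤ 1) (hw : ∀ i, 0 ≤ w i ∧ w i ≤ 1)
    (φ : ℝ → ℝ) (hφ : ConvexOn ℝ Set.univ φ)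
    (hsum : Summable (fun k : ℕ =>
      Real.exp (-(∑ i, w i * p i)) * (∑ i, w i * p i) ^ k / (Nat.factorial k) * φ k)) :
    ∑ S ∈ (Finset.univ : Finset (Fin n)).powerset,
        ((∏ i ∈ S, p i) * ∏ i ∈ Finset.univ \ S, (1 - p i)) * φ (∑ i ∈ S, w i) ≤
      ∑' k : ℕ,
        Real.exp (-(∑ i, w i * p i)) * (∑ i, w i * p i) ^ k / (Nat.factorial k) * φ k := by
  classical
  set lam := ∑ i, w i * p i with hlam
  have hlamnn : 0 ≤ lam := Finset.sum_nonneg fun i _ => mul_nonneg (hw i).1 (hp i).1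
  set d : ℝ := φ 0 - φ (-1) with hd
  set ψ : ℝ → ℝ := fun x => φ x - (φ 0 + d * x) with hψdef
  -- affine functions are convex and concave; ψ is convex
  have haff : ConcaveOn ℝ Set.univ (fun x : ℝ => φ 0 + d * x) := by
    constructor
    · exact convex_univ
    · intro x _ y _ a b ha hb hab
      simp only [smul_eq_mul]
      refine le_of_eq ?_
      linear_combination (φ 0) * hab
  have hψ : ConvexOn ℝ Set.univ ψ := hφ.sub haff
  -- ψ is nonnegative on [0, ∞)
  have hψ0 : ∀ x : ℝ, 0 ≤ x → 0 ≤ ψ x := by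
    intro x hx
    rcases eq_or_lt_of_le hx with h | h
    · simp [hψdef, ← h]
    · have hx1 : (0 : ℝ) < x + 1 := by linarith
      have h := hφ.2 (Set.mem_univ (-1 : ℝ)) (Set.mem_univ x)
        (div_nonneg h.le hx1.le) (div_nonneg zero_le_one hx1.le)
        (by field_simp)
      simp only [smul_eq_mul] at h
      have he : x / (x + 1) * (-1) + 1 / (x + 1) * x = 0 := by field_simp; ring
      rw [he] at h
      have hxne : x + 1 ≠ 0 := ne_of_gt hx1
      have h' := mul_le_mul_of_nonneg_left h (le_of_lt hx1)
      have e : (x + 1) * (x / (x + 1) * φ (-1) + 1 / (x + 1) * φ x) =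
          x * φ (-1) + φ x := by
        field_simp
      rw [e] at h'
      simp only [hψdef, hd]
      nlinarith [h']
  -- nonnegativity of coefficients
  have hcnn : ∀ T : Finset (Fin n), 0 ≤ (∏ i ∈ T, p i) * ∏ i ∈ Finset.univ \ T, (1 - p i) := by
    intro T
    exact mul_nonneg (Finset.prod_nonneg fun i _ => (hp i).1)
      (Finset.prod_nonneg fun i _ => by linarith [(hp i).2])
  have hσnn : ∀ T : Finset (Fin n), (0 : ℝ) ≤ ∑ i ∈ T, w i :=
    fun T => Finset.sum_nonneg fun i _ => (hw i).1
  -- pois summabilities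
  have hsum' : Summable (fun k : ℕ => pois lam k * φ k) := hsum
  have hsumaff : Summable (fun k : ℕ => pois lam k * (φ 0 + d * k)) := by
    have : (fun k : ℕ => pois lam k * (φ 0 + d * k)) =
        fun k : ℕ => (φ 0) * pois lam k + d * ((k : ℝ) * pois lam k) := by
      funext k; ring
    rw [this]
    exact ((summable_pois lam).mul_left (φ 0)).add ((summable_mul_pois lam).mul_left d)
  have hsumψ : Summable (fun k : ℕ => pois lam k * ψ k) := by
    have : (fun k : ℕ => pois lam k * ψ k) =
        fun k : ℕ => pois lam k * φ k - pois lam k * (φ 0 + d * k) := by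
      funext k; simp only [hψdef]; ring
    rw [this]
    exact hsum'.sub hsumaff
  have htsumaff : ∑' k : ℕ, pois lam k * (φ 0 + d * k) = φ 0 + d * lam := by
    have he : (fun k : ℕ => pois lam k * (φ 0 + d * k)) =
        fun k : ℕ => (φ 0) * pois lam k + d * ((k : ℝ) * pois lam k) := by
      funext k; ring
    rw [he, Summable.tsum_add ((summable_pois lam).mul_left (φ 0)) ((summable_mul_pois lam).mul_left d),
      tsum_mul_left, tsum_mul_left, tsum_pois, tsum_mul_pois]
    ring
  -- the ψ-inequality, transferred to ℝ
  have hmainE := main p w hp hw ψ hψ hψ0 Finset.univ 0 le_rfl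
  have hL : ∑ S ∈ (Finset.univ : Finset (Fin n)).powerset, ENNReal.ofReal
      (((∏ i ∈ S, p i) * ∏ i ∈ Finset.univ \ S, (1 - p i)) * ψ ((0 : ℝ) + ∑ i ∈ S, w i)) =
      ENNReal.ofReal (∑ S ∈ (Finset.univ : Finset (Fin n)).powerset,
        ((∏ i ∈ S, p i) * ∏ i ∈ Finset.univ \ S, (1 - p i)) * ψ (∑ i ∈ S, w i)) := by
    simp only [zero_add]
    rw [ENNReal.ofReal_sum_of_nonneg]
    intro S hS
    exact mul_nonneg (hcnn S) (hψ0 _ (hσnn S))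
  have hR : (∑' k : ℕ, ENNReal.ofReal (pois lam k * ψ ((0 : ℝ) + k))) =
      ENNReal.ofReal (∑' k : ℕ, pois lam k * ψ k) := by
    simp only [zero_add]
    rw [ENNReal.ofReal_tsum_of_nonneg (fun k =>
      mul_nonneg (pois_nonneg hlamnn k) (hψ0 _ (Nat.cast_nonneg k))) hsumψ]
  rw [hL, hR] at hmainE
  have hψineq : ∑ S ∈ (Finset.univ : Finset (Fin n)).powerset,
      ((∏ i ∈ S, p i) * ∏ i ∈ Finset.univ \ S, (1 - p i)) * ψ (∑ i ∈ S, w i) ≤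
      ∑' k : ℕ, pois lam k * ψ k := by
    rw [← ENNReal.ofReal_le_ofReal_iff]
    · exact hmainE
    · exact tsum_nonneg fun k => mul_nonneg (pois_nonneg hlamnn k) (hψ0 _ (Nat.cast_nonneg k))
  -- recombine with the affine part
  have hLHS : ∑ S ∈ (Finset.univ : Finset (Fin n)).powerset,
      ((∏ i ∈ S, p i) * ∏ i ∈ Finset.univ \ S, (1 - p i)) * φ (∑ i ∈ S, w i) =
      (∑ S ∈ (Finset.univ : Finset (Fin n)).powerset,
        ((∏ i ∈ S, p i) * ∏ i ∈ Finset.univ \ S, (1 - p i)) * ψ (∑ i ∈ S, w i)) +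
      (φ 0 + d * lam) := by
    have : ∀ S ∈ (Finset.univ : Finset (Fin n)).powerset,
        ((∏ i ∈ S, p i) * ∏ i ∈ Finset.univ \ S, (1 - p i)) * φ (∑ i ∈ S, w i) =
        ((∏ i ∈ S, p i) * ∏ i ∈ Finset.univ \ S, (1 - p i)) * ψ (∑ i ∈ S, w i) +
        (φ 0) * ((∏ i ∈ S, p i) * ∏ i ∈ Finset.univ \ S, (1 - p i)) +
        d * (((∏ i ∈ S, p i) * ∏ i ∈ Finset.univ \ S, (1 - p i)) * (∑ i ∈ S, w i)) := by
      intro S _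
      simp only [hψdef]; ring
    rw [Finset.sum_congr rfl this, Finset.sum_add_distrib, Finset.sum_add_distrib,
      ← Finset.mul_sum, ← Finset.mul_sum, mass, mean]
    simp [hlam]
    ring
  have hRHS : (∑' k : ℕ, pois lam k * φ k) =
      (∑' k : ℕ, pois lam k * ψ k) + (φ 0 + d * lam) := by
    have he : (fun k : ℕ => pois lam k * φ k) =
        fun k : ℕ => pois lam k * ψ k + pois lam k * (φ 0 + d * k) := by
      funext k; simp only [hψdef]; ring
    calc (∑' k : ℕ, pois lam k * φ k) =
        ∑' k : ℕ, (pois lam k * ψ k + pois lam k * (φ 0 + d * k)) := by rw [← he]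
      _ = (∑' k : ℕ, pois lam k * ψ k) + ∑' k : ℕ, pois lam k * (φ 0 + d * k) :=
          Summable.tsum_add hsumψ hsumaff
      _ = (∑' k : ℕ, pois lam k * ψ k) + (φ 0 + d * lam) := by rw [htsumaff]
  have hgoalR : (∑' k : ℕ,
      Real.exp (-lam) * lam ^ k / (Nat.factorial k) * φ k) = ∑' k : ℕ, pois lam k * φ k := rfl
  rw [hgoalR, hRHS, hLHS]
  linarith [hψineq]
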